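/- Let A ⊆ ℝ² be a non-empty bounded set, let π₁(A) = {x : ∃y, (x,y) ∈ A}, π₂(A) = {y : ∃x, (x,y) ∈ A}, and Σ(A) = {x + y : (x,y) ∈ A}. Then dim_H(π₁(A)) ≤ dim_H(Σ(A)) + upper box dimension of π₂(A). -/

import Mathlib

open MeasureTheory Filter

noncomputable def coverNum (F : Set ℝ) (r : ℝ) : ℕ :=
  sInf {n : ℕ | ∃ s : Finset ℝ, s.card = n ∧ F ⊆ ⋃ x ∈ s, Metric.closedBall x (r / 2)}

noncomputable def upperBoxDim (F : Set ℝ) : ℝ :=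
  limsup (fun r : ℝ => -Real.log (coverNum F r) / Real.log r) (nhdsWithin 0 (Set.Ioi 0))

open Set Metric Bornology
open scoped ENNReal NNReal

lemma grid_cover {R r : ℝ} (hR : 0 ≤ R) (hr : 0 < r) :
    ∃ fs : Finset ℝ, (fs.card : ℝ) ≤ 2 * R / r + 2 ∧
      Set.Icc (-R) R ⊆ ⋃ x ∈ fs, Metric.closedBall x (r / 2) := by
  set m : ℕ := ⌈2 * R / r⌉₊ + 1 with hm
  refine ⟨(Finset.range m).image (fun k : ℕ => -R + r / 2 + k * r), ?_, ?_⟩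
  · calc ((Finset.image _ (Finset.range m)).card : ℝ)
        ≤ ((Finset.range m).card : ℝ) := by exact_mod_cast Finset.card_image_le
      _ = (⌈2 * R / r⌉₊ : ℝ) + 1 := by simp [hm]
      _ ≤ (2 * R / r + 1) + 1 := by
          have := (Nat.ceil_lt_add_one (by positivity : (0:ℝ) ≤ 2 * R / r)).le
          linarith
      _ = 2 * R / r + 2 := by ring
  · intro x hx
    obtain ⟨hx1, hx2⟩ := hx
    set k : ℕ := ⌊(x + R) / r⌋₊ with hk
    have hxR : 0 ≤ x + R := by linarith
    have hk1 : (k : ℝ) * r ≤ x + R := by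
      rw [← le_div_iff₀ hr]
      exact Nat.floor_le (by positivity)
    have hk2 : x + R < ((k : ℝ) + 1) * r := by
      rw [← div_lt_iff₀ hr]
      exact Nat.lt_floor_add_one _
    have hkm : k < m := by
      have h1 : (k : ℝ) ≤ 2 * R / r := by
        calc (k : ℝ) ≤ (x + R) / r := Nat.floor_le (by positivity)
          _ ≤ 2 * R / r := by
            gcongr
            linarith
      have h2 : (k : ℝ) ≤ (⌈2 * R / r⌉₊ : ℝ) := h1.trans (Nat.le_ceil _)
      have h3 : k ≤ ⌈2 * R / r⌉₊ := by exact_mod_cast h2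
      omega
    refine Set.mem_iUnion₂.2 ⟨-R + r / 2 + k * r, ?_, ?_⟩
    · exact Finset.mem_image.2 ⟨k, Finset.mem_range.2 hkm, rfl⟩
    · rw [Metric.mem_closedBall, Real.dist_eq]
      rw [abs_le]
      constructor <;> nlinarith

lemma coverSet_nonempty {F : Set ℝ} (hF : IsBounded F) {r : ℝ} (hr : 0 < r) :
    {n : ℕ | ∃ s : Finset ℝ, s.card = n ∧ F ⊆ ⋃ x ∈ s, Metric.closedBall x (r / 2)}.Nonempty := by
  obtain ⟨R, hR0, hFR⟩ := hF.subset_closedBall_lt 0 0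
  have hIcc : F ⊆ Set.Icc (-R) R := by
    rwa [Real.closedBall_eq_Icc, zero_sub, zero_add] at hFR
  obtain ⟨fs, -, hcov⟩ := grid_cover hR0.le hr
  exact ⟨fs.card, fs, rfl, hIcc.trans hcov⟩

lemma coverNum_spec {F : Set ℝ} (hF : IsBounded F) {r : ℝ} (hr : 0 < r) :
    ∃ s : Finset ℝ, s.card = coverNum F r ∧ F ⊆ ⋃ x ∈ s, Metric.closedBall x (r / 2) :=
  Nat.sInf_mem (coverSet_nonempty hF hr)

lemma coverNum_le {F : Set ℝ} {R r : ℝ} (hR : 0 ≤ R) (hFR : F ⊆ Set.Icc (-R) R)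
    (hr : 0 < r) : (coverNum F r : ℝ) ≤ 2 * R / r + 2 := by
  obtain ⟨fs, hcard, hcov⟩ := grid_cover hR hr
  have h1 : coverNum F r ≤ fs.card := Nat.sInf_le ⟨fs, rfl, hFR.trans hcov⟩
  calc (coverNum F r : ℝ) ≤ (fs.card : ℝ) := by exact_mod_cast h1
    _ ≤ 2 * R / r + 2 := hcard

lemma one_le_coverNum {F : Set ℝ} (hne : F.Nonempty) (hF : IsBounded F) {r : ℝ}
    (hr : 0 < r) : 1 ≤ coverNum F r := by
  obtain ⟨fs, hcard, hcov⟩ := coverNum_spec hF hr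
  rcases Nat.eq_zero_or_pos (coverNum F r) with h0 | h1
  · exfalso
    rw [h0, Finset.card_eq_zero] at hcard
    obtain ⟨x, hx⟩ := hne
    have := hcov hx
    simp [hcard] at this
  · exact h1

lemma isBoundedUnder_ratio {F : Set ℝ} (hne : F.Nonempty) (hF : IsBounded F) :
    IsBoundedUnder (· ≤ ·) (nhdsWithin 0 (Set.Ioi 0))
      (fun r : ℝ => -Real.log (coverNum F r) / Real.log r) := by
  obtain ⟨R, hR0, hFR⟩ := hF.subset_closedBall_lt 0 0
  have hIcc : F ⊆ Set.Icc (-R) R := by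
    rwa [Real.closedBall_eq_Icc, zero_sub, zero_add] at hFR
  refine ⟨Real.log (2 * R + 2) + 1, ?_⟩
  rw [eventually_map]
  have hmem : Set.Ioo (0:ℝ) (Real.exp (-1)) ∈ nhdsWithin 0 (Set.Ioi 0) :=
    Ioo_mem_nhdsGT_of_mem ⟨le_refl _, Real.exp_pos _⟩
  filter_upwards [hmem] with r hr
  obtain ⟨hr0, hre⟩ := hr
  have hrlog : Real.log r < -1 := by
    have := Real.log_lt_log hr0 hre
    rwa [Real.log_exp] at this
  set L : ℝ := -Real.log r with hL
  have hL1 : 1 ≤ L := by simp [hL]; linarith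
  have hN1 : (1 : ℝ) ≤ (coverNum F r : ℝ) := by
    exact_mod_cast one_le_coverNum hne hF hr0
  have hr1 : r < 1 := hre.trans (by
    rw [show (1:ℝ) = Real.exp 0 by simp]
    exact Real.exp_lt_exp.2 (by norm_num))
  have hNle : (coverNum F r : ℝ) ≤ (2 * R + 2) / r := by
    have h1 : (coverNum F r : ℝ) ≤ 2 * R / r + 2 := coverNum_le hR0.le hIcc hr0
    have h2 : (2:ℝ) ≤ 2 / r := by
      rw [le_div_iff₀ hr0]; linarith
    rw [add_div]
    linarith
  have hlogN : Real.log (coverNum F r) ≤ Real.log (2 * R + 2) - Real.log r := by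
    calc Real.log (coverNum F r) ≤ Real.log ((2 * R + 2) / r) :=
          Real.log_le_log (by linarith) hNle
      _ = Real.log (2 * R + 2) - Real.log r := Real.log_div (by positivity) hr0.ne'
  have hlogpos : 0 ≤ Real.log (2 * R + 2) := Real.log_nonneg (by linarith)
  have hrewrite : -Real.log (coverNum F r) / Real.log r = Real.log (coverNum F r) / L := by
    rw [hL, div_neg, neg_div]
  rw [hrewrite, div_le_iff₀ (by linarith : (0:ℝ) < L)]
  have hlogN' : Real.log (coverNum F r) ≤ Real.log (2 * R + 2) + L := by
    rw [hL]; linarith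
  nlinarith [Real.log_nonneg hN1]

lemma upperBoxDim_nonneg {F : Set ℝ} (hne : F.Nonempty) (hF : IsBounded F) :
    0 ≤ upperBoxDim F := by
  refine le_limsup_of_frequently_le ?_ (isBoundedUnder_ratio hne hF)
  have hmem : Set.Ioo (0:ℝ) 1 ∈ nhdsWithin 0 (Set.Ioi 0) :=
    Ioo_mem_nhdsGT_of_mem ⟨le_refl _, one_pos⟩
  refine (eventually_iff_exists_mem.2 ⟨_, hmem, fun r hr => ?_⟩).frequently
  obtain ⟨hr0, hr1⟩ := hr
  have hN1 : (1 : ℝ) ≤ (coverNum F r : ℝ) := by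
    exact_mod_cast one_le_coverNum hne hF hr0
  have hlr : Real.log r < 0 := Real.log_neg hr0 hr1
  have : -Real.log (coverNum F r) / Real.log r = Real.log (coverNum F r) / (-Real.log r) := by
    rw [div_neg, neg_div]
  rw [this]
  exact div_nonneg (Real.log_nonneg hN1) (by linarith)

lemma eventually_coverNum_le {F : Set ℝ} (hne : F.Nonempty) (hF : IsBounded F) {t : ℝ}
    (ht : upperBoxDim F < t) :
    ∀ᶠ r in nhdsWithin 0 (Set.Ioi 0), (coverNum F r : ℝ) ≤ r ^ (-t) := by
  have h1 := eventually_lt_of_limsup_lt ht (isBoundedUnder_ratio hne hF)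
  have hmem : Set.Ioo (0:ℝ) 1 ∈ nhdsWithin 0 (Set.Ioi 0) :=
    Ioo_mem_nhdsGT_of_mem ⟨le_refl _, one_pos⟩
  filter_upwards [h1, eventually_iff.2 hmem] with r hur hr
  obtain ⟨hr0, hr1⟩ := hr
  have hN1 : (1 : ℝ) ≤ (coverNum F r : ℝ) := by
    exact_mod_cast one_le_coverNum hne hF hr0
  have hlr : Real.log r < 0 := Real.log_neg hr0 hr1
  rw [div_lt_iff_of_neg hlr] at hur
  have hlogN : Real.log (coverNum F r) < -t * Real.log r := by linarith
  calc (coverNum F r : ℝ) = Real.exp (Real.log (coverNum F r)) :=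
        (Real.exp_log (by linarith)).symm
    _ ≤ Real.exp (-t * Real.log r) := Real.exp_le_exp.2 hlogN.le
    _ = r ^ (-t) := by rw [Real.rpow_def_of_pos hr0, mul_comm]

lemma core_measure_zero {E F : Set ℝ} (hFne : F.Nonempty) (hFbd : IsBounded F)
    {s t : ℝ} (hs : 0 < s) (ht : 0 < t) (hμ : μH[s] E = 0)
    (hbox : upperBoxDim F < t) :
    μH[s + t] {z : ℝ | ∃ x ∈ E, ∃ y ∈ F, z = x - y} = 0 := by
  classical
  set P : Set ℝ := {z : ℝ | ∃ x ∈ E, ∃ y ∈ F, z = x - y} with hP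
  -- the small-scale covering hypothesis
  have hev := eventually_coverNum_le hFne hFbd hbox
  rw [eventually_iff, mem_nhdsGT_iff_exists_Ioo_subset] at hev
  obtain ⟨r₀, hr₀ : (0:ℝ) < r₀, hsub⟩ := hev
  have hcover : ∀ ρ : ℝ, 0 < ρ → ρ < r₀ → ∃ fs : Finset ℝ,
      (F ⊆ ⋃ x ∈ fs, Metric.closedBall x (ρ / 2)) ∧ ((fs.card : ℝ) ≤ ρ ^ (-t)) := by
    intro ρ hρ0 hρr
    obtain ⟨fs, hcard, hcov⟩ := coverNum_spec hFbd hρ0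
    refine ⟨fs, hcov, ?_⟩
    rw [hcard]
    exact hsub ⟨hρ0, hρr⟩
  rw [← nonpos_iff_eq_zero]
  refine ENNReal.le_of_forall_pos_le_add fun ε hε _ => ?_
  rw [zero_add]
  -- choose δ
  set C : ℝ≥0∞ := ENNReal.ofReal (3 ^ (s + t)) * 2 with hC
  have hC0 : C ≠ 0 := by
    simp [hC, ENNReal.ofReal_eq_zero, not_le]
    positivity
  have hCtop : C ≠ ∞ :=
    ENNReal.mul_ne_top ENNReal.ofReal_ne_top (by norm_num)
  set δ : ℝ := ((ε : ℝ≥0∞) / C).toReal with hδdef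
  have hδ0 : 0 < δ := ENNReal.toReal_pos
    (by simp [ENNReal.div_eq_zero_iff, hCtop]; exact_mod_cast hε.ne')
    (ENNReal.div_lt_top ENNReal.coe_ne_top hC0).ne
  have hδval : ENNReal.ofReal δ = (ε : ℝ≥0∞) / C := by
    rw [hδdef, ENNReal.ofReal_toReal]
    exact (ENNReal.div_lt_top ENNReal.coe_ne_top hC0).ne
  rw [Measure.hausdorffMeasure_apply]
  refine iSup₂_le fun r hr => ?_
  -- choose a real mesh size m
  obtain ⟨m, hm0, hmr₀, hmr⟩ : ∃ m : ℝ, 0 < m ∧ m < r₀ ∧ ENNReal.ofReal m ≤ r := by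
    rcases eq_or_ne r ∞ with hrt | hrt
    · exact ⟨r₀ / 2, by linarith, by linarith, by simp [hrt]⟩
    · refine ⟨min (r₀ / 2) r.toReal, lt_min (by linarith) (ENNReal.toReal_pos hr.ne' hrt), ?_, ?_⟩
      · exact lt_of_le_of_lt (min_le_left _ _) (by linarith)
      · calc ENNReal.ofReal (min (r₀ / 2) r.toReal) ≤ ENNReal.ofReal r.toReal :=
              ENNReal.ofReal_le_ofReal (min_le_right _ _)
          _ = r := ENNReal.ofReal_toReal hrt
  -- extract a cover of E with mesh m/3 and small s-sum
  have h0 : (⨅ (U : ℕ → Set ℝ) (_ : E ⊆ ⋃ n, U n)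
      (_ : ∀ n, EMetric.diam (U n) ≤ ENNReal.ofReal (m / 3)),
      ∑' n, ⨆ _ : (U n).Nonempty, EMetric.diam (U n) ^ s) ≤ 0 := by
    rw [← hμ, Measure.hausdorffMeasure_apply]
    exact le_iSup₂ (f := fun (r' : ℝ≥0∞) (_ : 0 < r') =>
      ⨅ (U : ℕ → Set ℝ) (_ : E ⊆ ⋃ n, U n) (_ : ∀ n, EMetric.diam (U n) ≤ r'),
        ∑' n, ⨆ _ : (U n).Nonempty, EMetric.diam (U n) ^ s)
      (ENNReal.ofReal (m / 3)) (by rw [ENNReal.ofReal_pos]; positivity)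
  have hlt : (⨅ (U : ℕ → Set ℝ) (_ : E ⊆ ⋃ n, U n)
      (_ : ∀ n, EMetric.diam (U n) ≤ ENNReal.ofReal (m / 3)),
      ∑' n, ⨆ _ : (U n).Nonempty, EMetric.diam (U n) ^ s) < ENNReal.ofReal δ :=
    lt_of_le_of_lt h0 (by rw [ENNReal.ofReal_pos]; exact hδ0)
  rw [iInf_lt_iff] at hlt
  obtain ⟨U, hlt⟩ := hlt
  rw [iInf_lt_iff] at hlt
  obtain ⟨hUE, hlt⟩ := hlt
  rw [iInf_lt_iff] at hlt
  obtain ⟨hUd, hUs⟩ := hlt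
  -- data for the cover of P
  set dn : ℕ → ℝ := fun n => (EMetric.diam (U n)).toReal with hdn
  have hUdfin : ∀ n, EMetric.diam (U n) ≠ ∞ :=
    fun n => ((hUd n).trans_lt ENNReal.ofReal_lt_top).ne
  have hdn0 : ∀ n, 0 ≤ dn n := fun n => ENNReal.toReal_nonneg
  have hdnm : ∀ n, dn n ≤ m / 3 := fun n =>
    ENNReal.toReal_le_of_le_ofReal (by positivity) (hUd n)
  set sm : ℕ → ℝ := fun n => min (m / 3) ((δ * (1 / 2) ^ (n + 1)) ^ (1 / s)) with hsm
  have hsm0 : ∀ n, 0 < sm n := fun n =>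
    lt_min (by positivity) (Real.rpow_pos_of_pos (by positivity) _)
  set ρ : ℕ → ℝ := fun n => max (dn n) (sm n) with hρ
  have hρ0 : ∀ n, 0 < ρ n := fun n => lt_of_lt_of_le (hsm0 n) (le_max_right _ _)
  have hρm : ∀ n, ρ n ≤ m / 3 := fun n => max_le (hdnm n) (min_le_left _ _)
  have hρr₀ : ∀ n, ρ n < r₀ := fun n => lt_of_le_of_lt (hρm n) (by linarith)
  choose fs hfscov hfscard using fun n => hcover (ρ n) (hρ0 n) (hρr₀ n)
  set e : ℕ → ℝ := fun n => if h : (U n).Nonempty then h.choose else 0 with he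
  have heU : ∀ n, (U n).Nonempty → e n ∈ U n := by
    intro n h
    simp only [he, dif_pos h]
    exact h.choose_spec
  set Rd : ℕ → ℝ := fun n => dn n + ρ n / 2 with hRd
  set W : ℕ → ℕ → Set ℝ := fun n j =>
    if j < (fs n).card then Metric.closedBall (e n - (fs n).toList.getD j 0) (Rd n) else ∅
    with hW
  set V : ℕ → Set ℝ := fun k => W k.unpair.1 k.unpair.2 with hV
  have hWdiam : ∀ n j, EMetric.diam (W n j) ≤ ENNReal.ofReal (3 * ρ n) := by
    intro n j
    simp only [hW]
    split_ifs with h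
    · refine EMetric.diam_le fun x hx y hy => ?_
      rw [edist_dist]
      refine ENNReal.ofReal_le_ofReal ?_
      have h1 := Metric.mem_closedBall.1 hx
      have h2 := Metric.mem_closedBall.1 hy
      have hd : dn n ≤ ρ n := le_max_left _ _
      calc dist x y
          ≤ dist x (e n - (fs n).toList.getD j 0) + dist (e n - (fs n).toList.getD j 0) y :=
            dist_triangle _ _ _
        _ ≤ Rd n + Rd n := by
            rw [dist_comm (e n - (fs n).toList.getD j 0) y]
            exact add_le_add h1 h2
        _ ≤ 3 * ρ n := by simp only [hRd]; linarith
    · simp [EMetric.diam]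
  have hVdiam : ∀ k, EMetric.diam (V k) ≤ r := by
    intro k
    refine (hWdiam _ _).trans (le_trans (ENNReal.ofReal_le_ofReal ?_) hmr)
    have := hρm k.unpair.1
    linarith
  have hVcov : P ⊆ ⋃ k, V k := by
    rintro z ⟨x, hxE, y, hyF, rfl⟩
    obtain ⟨n, hxU⟩ := Set.mem_iUnion.1 (hUE hxE)
    have hUn : (U n).Nonempty := ⟨x, hxU⟩
    obtain ⟨c, hcfs, hyc⟩ := Set.mem_iUnion₂.1 (hfscov n hyF)
    obtain ⟨j, hj, hjc⟩ := List.getElem_of_mem (Finset.mem_toList.2 hcfs)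
    rw [Finset.length_toList] at hj
    have hgetD : (fs n).toList.getD j 0 = c := by
      rw [List.getD_eq_getElem _ _ (by rwa [Finset.length_toList])]
      exact hjc
    have hdxe : dist x (e n) ≤ dn n := by
      have h1 : edist x (e n) ≤ EMetric.diam (U n) :=
        EMetric.edist_le_diam_of_mem hxU (heU n hUn)
      have h2 := (ENNReal.toReal_le_toReal (edist_ne_top x (e n)) (hUdfin n)).2 h1
      rwa [← dist_edist] at h2
    have hzmem : (x - y) ∈ W n j := by
      simp only [hW, if_pos hj, hgetD, Metric.mem_closedBall]
      have hyc' : dist y c ≤ ρ n / 2 := Metric.mem_closedBall.1 hyc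
      calc dist (x - y) (e n - c)
          ≤ dist (x - y) (e n - y) + dist (e n - y) (e n - c) := dist_triangle _ _ _
        _ = dist x (e n) + dist y c := by rw [dist_sub_right, dist_sub_left]
        _ ≤ Rd n := by simp only [hRd]; linarith
    refine Set.mem_iUnion.2 ⟨Nat.pair n j, ?_⟩
    simp only [hV, Nat.unpair_pair]
    exact hzmem
  -- bounding the sum
  have hinner : ∀ n, (∑' j, EMetric.diam (W n j) ^ (s + t))
      ≤ ENNReal.ofReal (3 ^ (s + t) * ρ n ^ s) := by
    intro n
    have hvan : ∀ j ∉ Finset.range (fs n).card, EMetric.diam (W n j) ^ (s + t) = 0 := by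
      intro j hj
      rw [Finset.mem_range, not_lt] at hj
      simp only [hW, if_neg (not_lt.2 hj)]
      rw [EMetric.diam, Metric.ediam_empty, ENNReal.zero_rpow_of_pos (by linarith)]
    rw [tsum_eq_sum hvan]
    calc ∑ j ∈ Finset.range (fs n).card, EMetric.diam (W n j) ^ (s + t)
        ≤ ∑ _j ∈ Finset.range (fs n).card, ENNReal.ofReal (3 * ρ n) ^ (s + t) :=
          Finset.sum_le_sum fun j _ => ENNReal.rpow_le_rpow (hWdiam n j) (by linarith)
      _ = ((fs n).card : ℝ≥0∞) * ENNReal.ofReal (3 * ρ n) ^ (s + t) := by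
          rw [Finset.sum_const, Finset.card_range, nsmul_eq_mul]
      _ ≤ ENNReal.ofReal (ρ n ^ (-t)) * ENNReal.ofReal ((3 * ρ n) ^ (s + t)) := by
          refine mul_le_mul' ?_ ?_
          · rw [← ENNReal.ofReal_natCast]
            exact ENNReal.ofReal_le_ofReal (hfscard n)
          · rw [ENNReal.ofReal_rpow_of_nonneg (by positivity) (by linarith)]
      _ = ENNReal.ofReal (ρ n ^ (-t) * (3 * ρ n) ^ (s + t)) :=
          (ENNReal.ofReal_mul (Real.rpow_nonneg (hρ0 n).le _)).symm
      _ = ENNReal.ofReal (3 ^ (s + t) * ρ n ^ s) := by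
          congr 1
          rw [Real.mul_rpow (by norm_num) (hρ0 n).le, ← mul_assoc,
            mul_comm (ρ n ^ (-t)), mul_assoc, ← Real.rpow_add (hρ0 n),
            show -t + (s + t) = s by ring]
  have hρs : ∀ n, ρ n ^ s ≤ dn n ^ s + δ * (1 / 2) ^ (n + 1) := by
    intro n
    have hsm_le : sm n ^ s ≤ δ * (1 / 2) ^ (n + 1) := by
      have hX : (0:ℝ) < δ * (1 / 2) ^ (n + 1) := by positivity
      calc sm n ^ s ≤ ((δ * (1 / 2) ^ (n + 1)) ^ (1 / s)) ^ s :=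
            Real.rpow_le_rpow (hsm0 n).le (min_le_right _ _) hs.le
        _ = δ * (1 / 2) ^ (n + 1) := by
            rw [← Real.rpow_mul hX.le, one_div_mul_cancel hs.ne', Real.rpow_one]
    have hdns : (0:ℝ) ≤ dn n ^ s := Real.rpow_nonneg (hdn0 n) s
    have hXpos : (0:ℝ) ≤ δ * (1 / 2) ^ (n + 1) := by positivity
    rcases max_cases (dn n) (sm n) with ⟨hmax, -⟩ | ⟨hmax, -⟩
    · simp only [hρ]
      rw [hmax]
      linarith
    · simp only [hρ]
      rw [hmax]
      linarith
  have hdnsum : (∑' n, ENNReal.ofReal (dn n ^ s)) ≤ ENNReal.ofReal δ := by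
    refine le_trans (ENNReal.tsum_le_tsum fun n => ?_) hUs.le
    by_cases h : (U n).Nonempty
    · calc ENNReal.ofReal (dn n ^ s) = ENNReal.ofReal (dn n) ^ s :=
            (ENNReal.ofReal_rpow_of_nonneg (hdn0 n) hs.le).symm
        _ = EMetric.diam (U n) ^ s := by
            simp only [hdn]
            rw [ENNReal.ofReal_toReal (hUdfin n)]
        _ ≤ ⨆ _ : (U n).Nonempty, EMetric.diam (U n) ^ s :=
            le_iSup (fun _ : (U n).Nonempty => EMetric.diam (U n) ^ s) h
    · rw [Set.not_nonempty_iff_eq_empty] at h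
      have hdnz : dn n = 0 := by simp [hdn, h, EMetric.diam]
      rw [hdnz, Real.zero_rpow hs.ne', ENNReal.ofReal_zero]
      exact zero_le
  have hgeom : (∑' n : ℕ, ENNReal.ofReal (δ * (1 / 2) ^ (n + 1))) = ENNReal.ofReal δ := by
    have hsummable : Summable fun n : ℕ => δ * (1 / 2 : ℝ) ^ (n + 1) := by
      refine Summable.congr (summable_geometric_two.mul_left (δ * (1 / 2))) fun n => ?_
      rw [pow_succ]
      ring
    rw [← ENNReal.ofReal_tsum_of_nonneg (fun n => by positivity) hsummable]
    congr 1
    have hterm : ∀ n : ℕ, δ * (1 / 2 : ℝ) ^ (n + 1) = δ / 2 / 2 ^ n := by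
      intro n
      have h2 : (1 / 2 : ℝ) ^ (n + 1) = (2 * 2 ^ n)⁻¹ := by
        rw [one_div, inv_pow, pow_succ, mul_comm]
      rw [h2, div_div, div_eq_mul_inv]
    calc ∑' n : ℕ, δ * (1 / 2 : ℝ) ^ (n + 1) = ∑' n : ℕ, δ / 2 / 2 ^ n := tsum_congr hterm
      _ = δ := tsum_geometric_two' δ
  have hrest : (∑' k, EMetric.diam (V k) ^ (s + t)) ≤ (ε : ℝ≥0∞) := by
    calc (∑' k, EMetric.diam (V k) ^ (s + t))
        = ∑' p : ℕ × ℕ, EMetric.diam (W p.1 p.2) ^ (s + t) := by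
          rw [← Equiv.tsum_eq Nat.pairEquiv (fun k => EMetric.diam (V k) ^ (s + t))]
          refine tsum_congr fun p => ?_
          rw [show Nat.pairEquiv p = Nat.pair p.1 p.2 from rfl]
          simp [hV, Nat.pairEquiv, Function.uncurry, Nat.unpair_pair]
      _ = ∑' n : ℕ, ∑' j : ℕ, EMetric.diam (W n j) ^ (s + t) := ENNReal.tsum_prod (f := fun n j => EMetric.diam (W n j) ^ (s + t))
      _ ≤ ∑' n : ℕ, ENNReal.ofReal (3 ^ (s + t) * ρ n ^ s) := ENNReal.tsum_le_tsum hinner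
      _ = ENNReal.ofReal (3 ^ (s + t)) * ∑' n, ENNReal.ofReal (ρ n ^ s) := by
          rw [← ENNReal.tsum_mul_left]
          refine tsum_congr fun n => ?_
          rw [← ENNReal.ofReal_mul (by positivity)]
      _ ≤ ENNReal.ofReal (3 ^ (s + t)) *
          ∑' n, (ENNReal.ofReal (dn n ^ s) + ENNReal.ofReal (δ * (1 / 2) ^ (n + 1))) := by
          refine mul_le_mul_right (ENNReal.tsum_le_tsum fun n => ?_) _
          exact le_trans (ENNReal.ofReal_le_ofReal (hρs n)) ENNReal.ofReal_add_le
      _ = ENNReal.ofReal (3 ^ (s + t)) *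
          ((∑' n, ENNReal.ofReal (dn n ^ s)) + ∑' n, ENNReal.ofReal (δ * (1 / 2) ^ (n + 1))) := by
          rw [ENNReal.tsum_add]
      _ ≤ ENNReal.ofReal (3 ^ (s + t)) * (ENNReal.ofReal δ + ENNReal.ofReal δ) :=
          mul_le_mul_right (add_le_add hdnsum hgeom.le) _
      _ = C * ENNReal.ofReal δ := by rw [hC]; ring
      _ = (ε : ℝ≥0∞) := by rw [hδval, ENNReal.mul_div_cancel hC0 hCtop]
  refine iInf_le_of_le V (iInf_le_of_le hVcov (iInf_le_of_le hVdiam ?_))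
  exact le_trans (ENNReal.tsum_le_tsum fun k => iSup_le fun _ => le_rfl) hrest


theorem dimH_fst_le_dimH_sum_add_upperBoxDim_snd (A : Set (ℝ × ℝ))
    (hne : A.Nonempty) (hbd : Bornology.IsBounded A) :
    dimH (Prod.fst '' A) ≤
      dimH ((fun p : ℝ × ℝ => p.1 + p.2) '' A) + ENNReal.ofReal (upperBoxDim (Prod.snd '' A)) := by
  set E : Set ℝ := (fun p : ℝ × ℝ => p.1 + p.2) '' A with hE
  set F : Set ℝ := Prod.snd '' A with hF
  set P : Set ℝ := Prod.fst '' A with hPdef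
  have hFne : F.Nonempty := hne.image _
  have hFbd : IsBounded F := LipschitzWith.prod_snd.isBounded_image hbd
  have hβ0 : 0 ≤ upperBoxDim F := upperBoxDim_nonneg hFne hFbd
  refine ENNReal.le_of_forall_pos_le_add fun ε hε hlt => ?_
  have hEtop : dimH E ≠ ∞ := fun h => by simp [h] at hlt
  set eE : ℝ := (dimH E).toReal with heE
  have heE0 : 0 ≤ eE := ENNReal.toReal_nonneg
  set s : ℝ := eE + ε / 2 with hsdef
  set t : ℝ := upperBoxDim F + ε / 2 with htdef
  have hs0 : 0 < s := by
    rw [hsdef]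
    positivity
  have ht0 : 0 < t := by
    rw [htdef]
    have h2 : (0:ℝ) < (ε:ℝ) / 2 := by positivity
    linarith
  have hst0 : 0 < s + t := by positivity
  have hofs : ENNReal.ofReal s = dimH E + ENNReal.ofReal ((ε : ℝ) / 2) := by
    rw [hsdef, ENNReal.ofReal_add heE0 (by positivity), heE, ENNReal.ofReal_toReal hEtop]
  have hsgt : dimH E < ENNReal.ofReal s := by
    rw [hofs]
    refine ENNReal.lt_add_right hEtop ?_
    simp [ENNReal.ofReal_eq_zero, not_le]
    positivity
  have htgt : upperBoxDim F < t := by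
    rw [htdef]
    have : (0:ℝ) < ε / 2 := by positivity
    linarith
  -- Hausdorff measure of E in dimension s is zero
  have hμE : μH[s] E = 0 := by
    have h1 : dimH E < ((s.toNNReal : ℝ≥0) : ℝ≥0∞) := by
      rw [show (((s.toNNReal : ℝ≥0)) : ℝ≥0∞) = ENNReal.ofReal s from rfl]
      exact hsgt
    have h2 := hausdorffMeasure_of_dimH_lt h1
    rwa [Real.coe_toNNReal s hs0.le] at h2
  have hcore := core_measure_zero hFne hFbd hs0 ht0 hμE htgt
  have hPsub : P ⊆ {z : ℝ | ∃ x ∈ E, ∃ y ∈ F, z = x - y} := by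
    rintro z ⟨p, hpA, rfl⟩
    exact ⟨p.1 + p.2, ⟨p, hpA, rfl⟩, p.2, ⟨p, hpA, rfl⟩, by ring⟩
  have hμP : μH[s + t] P = 0 := measure_mono_null hPsub hcore
  have hdimP : dimH P ≤ ENNReal.ofReal (s + t) := by
    have h1 : μH[(((s + t).toNNReal : ℝ≥0) : ℝ)] P ≠ ∞ := by
      rw [Real.coe_toNNReal _ hst0.le, hμP]
      exact ENNReal.zero_ne_top
    have h2 := dimH_le_of_hausdorffMeasure_ne_top h1
    rwa [show ((((s + t).toNNReal : ℝ≥0)) : ℝ≥0∞) = ENNReal.ofReal (s + t) from rfl] at h2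
  refine hdimP.trans ?_
  rw [ENNReal.ofReal_add hs0.le ht0.le, hofs, htdef,
    ENNReal.ofReal_add hβ0 (by positivity)]
  have : ENNReal.ofReal ((ε : ℝ) / 2) + ENNReal.ofReal ((ε : ℝ) / 2) = (ε : ℝ≥0∞) := by
    rw [← ENNReal.ofReal_add (by positivity) (by positivity)]
    rw [show (ε : ℝ) / 2 + (ε : ℝ) / 2 = (ε : ℝ) by ring, ENNReal.ofReal_coe_nnreal]
  rw [show dimH E + ENNReal.ofReal ((ε : ℝ) / 2) +
      (ENNReal.ofReal (upperBoxDim F) + ENNReal.ofReal ((ε : ℝ) / 2))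
      = dimH E + ENNReal.ofReal (upperBoxDim F) +
        (ENNReal.ofReal ((ε : ℝ) / 2) + ENNReal.ofReal ((ε : ℝ) / 2)) by ring, this]
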